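/- Exact compensated-coupling identity for online stochastic bipartite matching: For any online matching policy, on every sample path, v_off − v_on = Σ_{t=1}^{T} 1{ M(G_t(S^t)) ≠ 1{U^t ≠ ∅} + M(G_{t−1}(S^{t−1})) }, i.e., the difference between the offline maximum matching size and the number of matches made online equals the number of time steps at which the policy's action fails to satisfy the offline Bellman equation. -/
import Mathlib


open Finset

private lemma telescope_aux (g : ℕ → ℤ) : ∀ T : ℕ,
    ∑ t ∈ Finset.Icc 1 T, (g t - g (t - 1)) = g T - g 0
  | 0 => by simp
  | (T + 1) => by
    rw [Finset.sum_Icc_succ_top (by omega), telescope_aux g T]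
    simp only [Nat.add_sub_cancel]
    ring

/-- **Exact compensated-coupling identity for online stochastic bipartite matching**:
for any online matching policy (matching each arrival `θ^t` to an available neighbor
`Ut t = some u` or discarding it, `Ut t = none`), on every sample path,
`v_off − v_on = Σ_{t=1}^T 1{ M(G_t(S^t)) ≠ 1{U^t ≠ ∅} + M(G_{t−1}(S^{t−1})) }`,
where `M t s` is the maximum size of a matching between the available nodes `s` and the
future arrivals `θ^t, …, θ^1`. -/
theorem online_bipartite_matching_compensated_coupling
    {U V : Type*} [Fintype U] [DecidableEq U]
    (T : ℕ) (NB : V → Finset U)              -- neighborhoods N(v) ⊆ U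
    (θ : ℕ → V)                              -- the sample path of arrivals, θ t = θ^t
    -- maximum-matching size between available nodes s and the last t arrivals:
    (M : ℕ → Finset U → ℕ)
    (hM : ∀ (t : ℕ) (s : Finset U),
      IsGreatest {k : ℕ | ∃ D : Finset ℕ, D ⊆ Finset.Icc 1 t ∧ D.card = k ∧
        ∃ f : ℕ → U, Set.InjOn f ↑D ∧ ∀ τ ∈ D, f τ ∈ NB (θ τ) ∧ f τ ∈ s} (M t s))
    -- the online policy: matched node Ut t (none = discard) and available sets St
    (Ut : ℕ → Option U) (St : ℕ → Finset U)
    (hST : St T = Finset.univ)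
    (hpol : ∀ t, 1 ≤ t → t ≤ T →
      (∀ u, Ut t = some u → u ∈ NB (θ t) ∧ u ∈ St t ∧ St (t - 1) = St t \ {u}) ∧
      (Ut t = none → St (t - 1) = St t)) :
    (M T Finset.univ : ℤ) - ∑ t ∈ Finset.Icc 1 T, (if Ut t ≠ none then (1 : ℤ) else 0)
      = ∑ t ∈ Finset.Icc 1 T,
          (if M t (St t) ≠ (if Ut t ≠ none then 1 else 0) + M (t - 1) (St (t - 1))
            then (1 : ℤ) else 0) := by
  have hM0 : M 0 (St 0) = 0 := by
    obtain ⟨⟨D, hD, hcard, -⟩, -⟩ := hM 0 (St 0)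
    rw [Finset.Icc_eq_empty (by omega), Finset.subset_empty] at hD
    subst hD
    simpa using hcard.symm
  have key : ∀ t, 1 ≤ t → t ≤ T →
      (if Ut t ≠ none then 1 else 0) + M (t - 1) (St (t - 1)) ≤ M t (St t) ∧
      M t (St t) ≤ (if Ut t ≠ none then 1 else 0) + M (t - 1) (St (t - 1)) + 1 := by
    intro t h1 h2
    have hsub : Finset.Icc 1 (t - 1) ⊆ Finset.Icc 1 t :=
      Finset.Icc_subset_Icc le_rfl (by omega)
    constructor
    · obtain ⟨⟨D, hD, hcard, f, hinj, hf⟩, -⟩ := hM (t - 1) (St (t - 1))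
      have htD : t ∉ D := fun h => by
        have := hD h; rw [Finset.mem_Icc] at this; omega
      cases hu : Ut t with
      | none =>
        have hS : St (t - 1) = St t := (hpol t h1 h2).2 hu
        have hle := (hM t (St t)).2 ⟨D, hD.trans hsub, hcard, f, hinj, fun τ hτ =>
          ⟨(hf τ hτ).1, hS ▸ (hf τ hτ).2⟩⟩
        simp only [hu, ne_eq, not_true_eq_false, if_false]
        omega
      | some u =>
        obtain ⟨hu1, hu2, hu3⟩ := (hpol t h1 h2).1 u hu
        have hfu : ∀ τ ∈ D, f τ ≠ u := fun τ hτ => by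
          have := (hf τ hτ).2
          rw [hu3, Finset.mem_sdiff, Finset.mem_singleton] at this
          exact this.2
        have hle : (insert t D).card ≤ M t (St t) :=
          (hM t (St t)).2 ⟨insert t D, ?_, rfl, Function.update f t u, ?_, ?_⟩
        · rw [Finset.card_insert_of_notMem htD, hcard] at hle
          simp only [hu, ne_eq, reduceCtorEq, not_false_eq_true, if_true]
          omega
        · intro τ hτ
          rw [Finset.mem_insert] at hτ
          rcases hτ with rfl | hτ
          · rw [Finset.mem_Icc]; omega
          · exact hsub (hD hτ)
        · intro a ha b hb hab
          simp only [Finset.coe_insert, Set.mem_insert_iff, Finset.mem_coe] at ha hb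
          rcases ha with rfl | ha <;> rcases hb with rfl | hb
          · rfl
          · rw [Function.update_self,
              Function.update_of_ne (by rintro rfl; exact htD hb)] at hab
            exact absurd hab.symm (hfu b hb)
          · rw [Function.update_self,
              Function.update_of_ne (by rintro rfl; exact htD ha)] at hab
            exact absurd hab (hfu a ha)
          · rw [Function.update_of_ne (by rintro rfl; exact htD ha),
              Function.update_of_ne (by rintro rfl; exact htD hb)] at hab
            exact hinj ha hb hab
        · intro τ hτ
          rw [Finset.mem_insert] at hτ
          rcases hτ with rfl | hτ
          · rw [Function.update_self]; exact ⟨hu1, hu2⟩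
          · rw [Function.update_of_ne (by rintro rfl; exact htD hτ)]
            refine ⟨(hf τ hτ).1, ?_⟩
            have := (hf τ hτ).2
            rw [hu3, Finset.mem_sdiff] at this
            exact this.1
    · obtain ⟨⟨D, hD, hcard, f, hinj, hf⟩, -⟩ := hM t (St t)
      cases hu : Ut t with
      | none =>
        have hS : St (t - 1) = St t := (hpol t h1 h2).2 hu
        have hle : (D.erase t).card ≤ M (t - 1) (St (t - 1)) :=
          (hM (t - 1) (St (t - 1))).2 ⟨D.erase t, ?_, rfl, f,
            hinj.mono (by simp [Finset.erase_subset]), ?_⟩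
        · have hce : D.card - 1 ≤ (D.erase t).card := Finset.pred_card_le_card_erase
          simp only [hu, ne_eq, not_true_eq_false, if_false]
          have h0 : 1 ≤ D.card ∨ D.card = 0 := by omega
          omega
        · intro τ hτ
          rw [Finset.mem_erase] at hτ
          have := hD hτ.2
          rw [Finset.mem_Icc] at this ⊢
          have := hτ.1
          omega
        · intro τ hτ
          rw [Finset.mem_erase] at hτ
          exact ⟨(hf τ hτ.2).1, hS ▸ (hf τ hτ.2).2⟩
      | some u =>
        obtain ⟨hu1, hu2, hu3⟩ := (hpol t h1 h2).1 u hu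
        set E := (D.erase t).filter (fun τ => f τ ≠ u) with hE
        have hEsub : E ⊆ D := by
          intro τ hτ
          rw [hE, Finset.mem_filter, Finset.mem_erase] at hτ
          exact hτ.1.2
        have hFcard : ((D.erase t).filter (fun τ => f τ = u)).card ≤ 1 := by
          rw [Finset.card_le_one]
          intro a ha b hb
          rw [Finset.mem_filter, Finset.mem_erase] at ha hb
          exact hinj (ha.1.2) (hb.1.2) (ha.2.trans hb.2.symm)
        have hsplit : ((D.erase t).filter (fun τ => f τ = u)).card + E.card
            = (D.erase t).card := by
          rw [hE]
          exact Finset.card_filter_add_card_filter_not _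
        have hce : D.card - 1 ≤ (D.erase t).card := Finset.pred_card_le_card_erase
        have hle : E.card ≤ M (t - 1) (St (t - 1)) :=
          (hM (t - 1) (St (t - 1))).2 ⟨E, ?_, rfl, f,
            hinj.mono (by exact_mod_cast hEsub), ?_⟩
        · simp only [hu, ne_eq, reduceCtorEq, not_false_eq_true, if_true]
          omega
        · intro τ hτ
          rw [hE, Finset.mem_filter, Finset.mem_erase] at hτ
          have := hD hτ.1.2
          rw [Finset.mem_Icc] at this ⊢
          have := hτ.1.1
          omega
        · intro τ hτ
          have hτ' := hτ
          rw [hE, Finset.mem_filter, Finset.mem_erase] at hτ'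
          refine ⟨(hf τ (hEsub hτ)).1, ?_⟩
          rw [hu3, Finset.mem_sdiff, Finset.mem_singleton]
          exact ⟨(hf τ (hEsub hτ)).2, hτ'.2⟩
  have step : ∀ t ∈ Finset.Icc 1 T,
      (if M t (St t) ≠ (if Ut t ≠ none then 1 else 0) + M (t - 1) (St (t - 1))
        then (1 : ℤ) else 0)
      = ((M t (St t) : ℤ) - (M (t - 1) (St (t - 1)) : ℤ))
        - (if Ut t ≠ none then (1 : ℤ) else 0) := by
    intro t ht
    rw [Finset.mem_Icc] at ht
    obtain ⟨hlo, hhi⟩ := key t ht.1 ht.2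
    by_cases hc : Ut t = none <;>
      simp only [hc, ne_eq, not_true_eq_false, if_false, reduceCtorEq,
        not_false_eq_true, if_true] at hlo hhi ⊢ <;>
      split_ifs with h <;> omega
  rw [Finset.sum_congr rfl step, Finset.sum_sub_distrib,
    telescope_aux (fun t => (M t (St t) : ℤ)) T]
  simp only [hST, hM0, Nat.cast_zero]
  ring
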